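/- Consider the doubly warped metric g = dr² + ω(r,t)²dt² + β(r)²ds²_n on B × S^n with B = (0,b₁) × (0,b₂), n ≥ 2, with smooth positive warping functions β(r) and ω(r,t). Suppose on the relevant region: β > 0, β_r² ≤ 1, β_{rr} ≤ 0, ω_{rr} ≤ 0, and β_r ω_r ≤ 0 pointwise. Then for every p with 0 ≤ p ≤ n-2 and every p-plane P in the tangent space at any point, s_{p,n+2}(P) ≥ (n-p)(n-p-1)(1-β_r²)/β² ≥ 0; in particular if additionally (1-β_r²)/β² > 0, then g has positive (p,n+2)-intermediate scalar curvature. -/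

import Mathlib

open Module

private lemma dw_ite_pair {m : ℕ} (a b : Fin (m + 2)) (X : ℝ) (hX : a = b → X = 0) :
    (if 1 < a ∧ a < b then X else 0) + (if 1 < b ∧ b < a then X else 0)
    = (if 1 < a then (1:ℝ) else 0) * (if 1 < b then (1:ℝ) else 0) * X := by
  by_cases h1 : (1:Fin (m+2)) < a <;> by_cases h2 : (1:Fin (m+2)) < b
  · rcases lt_trichotomy a b with h|h|h
    · simp [h, not_lt_of_gt h, h1, h2]
    · subst h; simp [hX rfl]
    · simp [h, not_lt_of_gt h, h1, h2]
  · have hba : ¬ a < b := not_lt.mpr ((not_lt.mp h2).trans h1.le)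
    simp [h2, hba]
  · have hab : ¬ b < a := not_lt.mpr ((not_lt.mp h1).trans h2.le)
    simp [h1, hab]
  · simp [h1, h2]

private lemma dw_lagrange {m : ℕ} (v w : Fin (m + 2) → ℝ) :
    ∑ a : Fin (m+2), ∑ b : Fin (m+2),
        (if 1 < a ∧ a < b then (v a * w b - v b * w a)^2 else 0)
      = (∑ a : Fin (m+2), if 1 < a then v a * v a else 0) *
          (∑ a : Fin (m+2), if 1 < a then w a * w a else 0) -
        (∑ a : Fin (m+2), if 1 < a then v a * w a else 0)^2 := by
  have key : (2:ℝ) * ∑ a : Fin (m+2), ∑ b : Fin (m+2),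
        (if 1 < a ∧ a < b then (v a * w b - v b * w a)^2 else 0)
      = ∑ a : Fin (m+2), ∑ b : Fin (m+2),
        (if 1 < a then (1:ℝ) else 0) * (if 1 < b then (1:ℝ) else 0)
          * (v a * w b - v b * w a)^2 := by
    rw [two_mul]
    nth_rewrite 2 [Finset.sum_comm]
    rw [← Finset.sum_add_distrib]
    refine Finset.sum_congr rfl fun a _ => ?_
    rw [← Finset.sum_add_distrib]
    refine Finset.sum_congr rfl fun b _ => ?_
    have := dw_ite_pair a b ((v a * w b - v b * w a)^2) (by intro h; subst h; ring)
    have h2 : (v b * w a - v a * w b)^2 = (v a * w b - v b * w a)^2 := by ring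
    rw [h2]
    exact this
  have expand : ∑ a : Fin (m+2), ∑ b : Fin (m+2),
        (if 1 < a then (1:ℝ) else 0) * (if 1 < b then (1:ℝ) else 0)
          * (v a * w b - v b * w a)^2
      = (∑ a : Fin (m+2), if 1 < a then v a * v a else 0) *
          (∑ a : Fin (m+2), if 1 < a then w a * w a else 0)
        + (∑ a : Fin (m+2), if 1 < a then w a * w a else 0) *
          (∑ a : Fin (m+2), if 1 < a then v a * v a else 0)
        - 2 * ((∑ a : Fin (m+2), if 1 < a then v a * w a else 0) *
          (∑ a : Fin (m+2), if 1 < a then v a * w a else 0)) := by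
    have point : ∀ a b : Fin (m+2),
        (if 1 < a then (1:ℝ) else 0) * (if 1 < b then (1:ℝ) else 0)
          * (v a * w b - v b * w a)^2
        = (if 1 < a then v a * v a else 0) * (if 1 < b then w b * w b else 0)
          + (if 1 < a then w a * w a else 0) * (if 1 < b then v b * v b else 0)
          - 2 * ((if 1 < a then v a * w a else 0) * (if 1 < b then v b * w b else 0)) := by
      intro a b
      by_cases h1 : (1:Fin (m+2)) < a <;> by_cases h2 : (1:Fin (m+2)) < b <;>
        simp [h1, h2] <;> ring
    simp only [point]
    simp only [Finset.sum_sub_distrib, Finset.sum_add_distrib, ← Finset.sum_mul,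
      ← Finset.mul_sum]
  rw [expand] at key
  nlinarith [key]

private lemma dw_F_split {m : ℕ} (f : Fin (m + 2) → ℝ) :
    ∑ a : Fin (m+2), (if 1 < a then f a else 0)
      = (∑ a : Fin (m+2), f a) - f 0 - f 1 := by
  have point : ∀ a : Fin (m+2), (if 1 < a then f a else 0)
      = f a - (if a = 0 then f a else 0) - (if a = 1 then f a else 0) := by
    intro a
    by_cases h0 : a = 0
    · subst h0
      have : ¬ (1:Fin (m+2)) < 0 := by simp [Fin.lt_def]
      simp [this]
    · by_cases h1 : a = 1
      · subst h1; simp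
      · have : (1:Fin (m+2)) < a := by
          rw [Fin.lt_def]
          have := Fin.val_ne_of_ne h0
          have := Fin.val_ne_of_ne h1
          simp only [Fin.val_zero, Fin.val_one] at *
          omega
        simp [this, h0, h1]
  simp only [point]
  rw [Finset.sum_sub_distrib, Finset.sum_sub_distrib]
  simp

private lemma dw_quad {k m : ℕ} (E : Fin k → Fin (m+2) → ℝ) (x : Fin k → ℝ) :
    ∑ i : Fin k, ∑ j : Fin k,
        (∑ a : Fin (m+2), if 1 < a then E i a * E j a else 0) * (x i * x j)
      = ∑ a : Fin (m+2), (if 1 < a then (∑ i : Fin k, x i * E i a)^2 else 0) := by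
  have step1 : ∀ i j : Fin k,
      (∑ a : Fin (m+2), if 1 < a then E i a * E j a else 0) * (x i * x j)
      = ∑ a : Fin (m+2), if 1 < a then (x i * E i a) * (x j * E j a) else 0 := by
    intro i j
    rw [Finset.sum_mul]
    refine Finset.sum_congr rfl fun a _ => ?_
    by_cases h : (1:Fin (m+2)) < a <;> simp [h] <;> ring
  simp only [step1]
  have swap1 : ∑ i : Fin k, ∑ j : Fin k,
        (∑ a : Fin (m+2), if 1 < a then (x i * E i a) * (x j * E j a) else 0)
      = ∑ a : Fin (m+2), ∑ i : Fin k, ∑ j : Fin k,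
        (if 1 < a then (x i * E i a) * (x j * E j a) else 0) :=
    (Finset.sum_congr rfl fun i _ => Finset.sum_comm).trans Finset.sum_comm
  rw [swap1]
  refine Finset.sum_congr rfl fun a _ => ?_
  by_cases h : (1:Fin (m+2)) < a
  · simp only [h, if_true]
    rw [sq, Finset.sum_mul_sum]
  · simp [h]

/-- Sectional curvature of the doubly warped metric `dr² + ω(r,t)² dt² + β(r)² ds²_n`
on `(0,b₁) × (0,b₂) × S^n`, in an orthonormal frame with index `0` the radial direction
`∂_r`, index `1` the normalized `∂_t` direction, and indices `i ≥ 2` normalized fiber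
directions, evaluated at the base point `(r,t)`. -/
noncomputable def dwK (n : ℕ) (β : ℝ → ℝ) (ω : ℝ → ℝ → ℝ) (r t : ℝ)
    (v w : EuclideanSpace ℝ (Fin (n + 2))) : ℝ :=
  -(deriv (fun x => deriv (fun y => ω y t) x) r / ω r t) *
      (v 1 * w 0 - v 0 * w 1) ^ 2 +
    ((1 - (deriv β r) ^ 2) / (β r) ^ 2) *
      (∑ i : Fin (n + 2), ∑ j : Fin (n + 2),
        if 1 < i ∧ i < j then (v i * w j - v j * w i) ^ 2 else 0) -
    (deriv (deriv β) r / β r) *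
      (∑ i : Fin (n + 2), if 1 < i then (v i * w 0 - w i * v 0) ^ 2 else 0) -
    (deriv β r * deriv (fun x => ω x t) r / (β r * ω r t)) *
      (∑ i : Fin (n + 2), if 1 < i then (v i * w 1 - w i * v 1) ^ 2 else 0)

/-- `∑_{i ≠ j} K (e i) (e j)`: the `(p,n+2)`-intermediate scalar curvature when `e`
is an orthonormal basis of the orthogonal complement of a `p`-plane. -/
noncomputable def sSum {m k : ℕ}
    (K : EuclideanSpace ℝ (Fin m) → EuclideanSpace ℝ (Fin m) → ℝ)
    (e : Fin k → EuclideanSpace ℝ (Fin m)) : ℝ :=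
  ∑ i : Fin k, ∑ j : Fin k, if i ≠ j then K (e i) (e j) else 0

/-- For the doubly warped metric `dr² + ω(r,t)² dt² + β(r)² ds²_n` with `n ≥ 2` and
the sign conditions `β > 0`, `ω > 0`, `β_r² ≤ 1`, `β_rr ≤ 0`, `ω_rr ≤ 0` and
`β_r ω_r ≤ 0` pointwise on the region, every `p`-plane `P` with `0 ≤ p ≤ n-2`
satisfies `s_{p,n+2}(P) ≥ (n-p)(n-p-1)(1-β_r²)/β² ≥ 0`; if moreover
`(1-β_r²)/β² > 0` at the point, then `s_{p,n+2}(P) > 0`. -/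
theorem doubly_warped_intermediate_curvature_bound (n p : ℕ) (hn : 2 ≤ n)
    (hp : p ≤ n - 2) (b₁ b₂ : ℝ) (hb₁ : 0 < b₁) (hb₂ : 0 < b₂)
    (β : ℝ → ℝ) (ω : ℝ → ℝ → ℝ)
    (hβ : ∀ r ∈ Set.Ioo (0 : ℝ) b₁, 0 < β r)
    (hω : ∀ r ∈ Set.Ioo (0 : ℝ) b₁, ∀ t ∈ Set.Ioo (0 : ℝ) b₂, 0 < ω r t)
    (hβr : ∀ r ∈ Set.Ioo (0 : ℝ) b₁, (deriv β r) ^ 2 ≤ 1)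
    (hβrr : ∀ r ∈ Set.Ioo (0 : ℝ) b₁, deriv (deriv β) r ≤ 0)
    (hωrr : ∀ r ∈ Set.Ioo (0 : ℝ) b₁, ∀ t ∈ Set.Ioo (0 : ℝ) b₂,
      deriv (fun x => deriv (fun y => ω y t) x) r ≤ 0)
    (hβω : ∀ r ∈ Set.Ioo (0 : ℝ) b₁, ∀ t ∈ Set.Ioo (0 : ℝ) b₂,
      deriv β r * deriv (fun x => ω x t) r ≤ 0) :
    ∀ r ∈ Set.Ioo (0 : ℝ) b₁, ∀ t ∈ Set.Ioo (0 : ℝ) b₂,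
      ∀ P : Submodule ℝ (EuclideanSpace ℝ (Fin (n + 2))), finrank ℝ P = p →
        ∀ e : Fin (n + 2 - p) → EuclideanSpace ℝ (Fin (n + 2)),
          Orthonormal ℝ e → (∀ i, e i ∈ Pᗮ) →
            ((n - p : ℕ) : ℝ) * ((n - p - 1 : ℕ) : ℝ) *
                ((1 - (deriv β r) ^ 2) / (β r) ^ 2) ≤ sSum (dwK n β ω r t) e ∧
              (0 < (1 - (deriv β r) ^ 2) / (β r) ^ 2 →
                0 < sSum (dwK n β ω r t) e) := by
  intro r hr t ht P hP e he hPe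
  classical
  have hpn : p + 2 ≤ n := by omega
  have hβ0 := hβ r hr
  have hω0 := hω r hr t ht
  set c := (1 - deriv β r ^ 2) / β r ^ 2 with hcdef
  have hc : 0 ≤ c := by
    rw [hcdef]
    exact div_nonneg (by linarith [hβr r hr]) (sq_nonneg _)
  clear_value c
  -- per-pair lower bound by the fiber term
  have hpair : ∀ v w : EuclideanSpace ℝ (Fin (n+2)),
      c * (∑ a : Fin (n+2), ∑ b : Fin (n+2),
          if 1 < a ∧ a < b then (v a * w b - v b * w a)^2 else 0)
        ≤ dwK n β ω r t v w := by
    intro v w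
    have h1 : 0 ≤ -(deriv (fun x => deriv (fun y => ω y t) x) r / ω r t) *
        (v 1 * w 0 - v 0 * w 1) ^ 2 := by
      apply mul_nonneg _ (sq_nonneg _)
      have := div_nonpos_of_nonpos_of_nonneg (hωrr r hr t ht) hω0.le
      linarith
    have h3 : deriv (deriv β) r / β r *
        (∑ i : Fin (n+2), if 1 < i then (v i * w 0 - w i * v 0)^2 else 0) ≤ 0 :=
      mul_nonpos_of_nonpos_of_nonneg (div_nonpos_of_nonpos_of_nonneg (hβrr r hr) hβ0.le)
        (Finset.sum_nonneg fun i _ => by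
          by_cases h : (1:Fin (n+2)) < i <;> simp [h, sq_nonneg])
    have h4 : deriv β r * deriv (fun x => ω x t) r / (β r * ω r t) *
        (∑ i : Fin (n+2), if 1 < i then (v i * w 1 - w i * v 1)^2 else 0) ≤ 0 :=
      mul_nonpos_of_nonpos_of_nonneg
        (div_nonpos_of_nonpos_of_nonneg (hβω r hr t ht) (by positivity))
        (Finset.sum_nonneg fun i _ => by
          by_cases h : (1:Fin (n+2)) < i <;> simp [h, sq_nonneg])
    unfold dwK
    rw [← hcdef]
    linarith
  -- the sum of fiber terms over the frame
  set SW := ∑ i : Fin (n+2-p), ∑ j : Fin (n+2-p),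
      (∑ a : Fin (n+2), ∑ b : Fin (n+2),
        if 1 < a ∧ a < b then (e i a * e j b - e i b * e j a)^2 else 0) with hSW
  have hdiag : ∀ i : Fin (n+2-p),
      (∑ a : Fin (n+2), ∑ b : Fin (n+2),
        if 1 < a ∧ a < b then (e i a * e i b - e i b * e i a)^2 else 0) = 0 :=
    fun i => Finset.sum_eq_zero fun a _ => Finset.sum_eq_zero fun b _ => by
      rw [mul_comm (e i b) (e i a), sub_self]
      simp
  have hlow : c * SW ≤ sSum (dwK n β ω r t) e := by
    rw [hSW, Finset.mul_sum]
    unfold sSum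
    refine Finset.sum_le_sum fun i _ => ?_
    rw [Finset.mul_sum]
    refine Finset.sum_le_sum fun j _ => ?_
    by_cases h : i = j
    · subst h
      rw [if_neg (by simp), hdiag i, mul_zero]
    · rw [if_pos h]
      exact hpair (e i) (e j)
  -- orthonormality facts
  have hER : ∀ i j, (∑ a : Fin (n+2), e i a * e j a) = if i = j then (1:ℝ) else 0 := by
    intro i j
    have h := orthonormal_iff_ite.mp he i j
    rw [PiLp.inner_apply] at h
    simpa [RCLike.inner_apply, mul_comm] using h
  set G : Fin (n+2-p) → Fin (n+2-p) → ℝ :=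
    fun i j => ∑ a : Fin (n+2), if 1 < a then e i a * e j a else 0 with hGdef
  have hG : ∀ i j, G i j = (if i = j then (1:ℝ) else 0)
      - e i 0 * e j 0 - e i 1 * e j 1 := by
    intro i j
    simp only [hGdef]
    rw [dw_F_split (m := n) (fun a => e i a * e j a), hER i j]
  set A := ∑ i : Fin (n+2-p), e i 0 * e i 0 with hA_def
  set B := ∑ i : Fin (n+2-p), e i 1 * e i 1 with hB_def
  set Tx := ∑ a : Fin (n+2),
      (if 1 < a then (∑ i : Fin (n+2-p), e i 0 * e i a)^2 else 0) with hTx_def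
  set Ty := ∑ a : Fin (n+2),
      (if 1 < a then (∑ i : Fin (n+2-p), e i 1 * e i a)^2 else 0) with hTy_def
  have hTx0 : 0 ≤ Tx := Finset.sum_nonneg fun a _ => by
    by_cases h : (1:Fin (n+2)) < a <;> simp [h, sq_nonneg]
  have hTy0 : 0 ≤ Ty := Finset.sum_nonneg fun a _ => by
    by_cases h : (1:Fin (n+2)) < a <;> simp [h, sq_nonneg]
  have hA0 : 0 ≤ A := Finset.sum_nonneg fun i _ => mul_self_nonneg _
  have hB0 : 0 ≤ B := Finset.sum_nonneg fun i _ => mul_self_nonneg _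
  have hbessel : ∀ b : Fin (n+2), (∑ i : Fin (n+2-p), e i b * e i b) ≤ 1 := by
    intro b
    have h := he.sum_inner_products_le (𝕜 := ℝ)
      (EuclideanSpace.single (b : Fin (n+2)) (1:ℝ)) (s := Finset.univ)
    simp [EuclideanSpace.inner_single_right, EuclideanSpace.norm_single] at h
    calc ∑ i : Fin (n+2-p), e i b * e i b = ∑ i : Fin (n+2-p), (e i b)^2 := by
          refine Finset.sum_congr rfl fun i _ => ?_
          rw [sq]
      _ ≤ 1 := h
  have hA1 : A ≤ 1 := hbessel 0
  have hB1 : B ≤ 1 := hbessel 1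
  -- trace of G
  have htr : (∑ i : Fin (n+2-p), G i i) = ((n+2-p : ℕ) : ℝ) - A - B := by
    have hGii : ∀ i, G i i = 1 - e i 0 * e i 0 - e i 1 * e i 1 := fun i => by
      rw [hG i i, if_pos rfl]
    simp only [hGii]
    rw [Finset.sum_sub_distrib, Finset.sum_sub_distrib, ← hA_def, ← hB_def]
    simp [Finset.card_univ]
  -- sum of squares of G
  have hGsq : (∑ i : Fin (n+2-p), ∑ j : Fin (n+2-p), (G i j)^2)
      = (∑ i : Fin (n+2-p), G i i) - Tx - Ty := by
    have e1 : ∀ i j, (G i j)^2 = (if j = i then G i j else 0)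
        - G i j * (e i 0 * e j 0) - G i j * (e i 1 * e j 1) := by
      intro i j
      by_cases h : i = j
      · subst h
        have h2 := hG i i
        rw [if_pos rfl] at h2
        rw [if_pos rfl, h2]
        ring
      · rw [hG i j, if_neg h, if_neg fun hh => h hh.symm]
        ring
    have hid : ∑ i : Fin (n+2-p), ∑ j : Fin (n+2-p), (if j = i then G i j else 0)
        = ∑ i : Fin (n+2-p), G i i := by
      refine Finset.sum_congr rfl fun i _ => ?_
      rw [Finset.sum_ite_eq' Finset.univ i (fun j => G i j)]
      simp
    have hqx : ∑ i : Fin (n+2-p), ∑ j : Fin (n+2-p), G i j * (e i 0 * e j 0) = Tx := by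
      rw [hTx_def]
      simp only [hGdef]
      exact dw_quad (m := n) (fun i a => e i a) (fun i => e i 0)
    have hqy : ∑ i : Fin (n+2-p), ∑ j : Fin (n+2-p), G i j * (e i 1 * e j 1) = Ty := by
      rw [hTy_def]
      simp only [hGdef]
      exact dw_quad (m := n) (fun i a => e i a) (fun i => e i 1)
    calc ∑ i : Fin (n+2-p), ∑ j : Fin (n+2-p), (G i j)^2
        = ∑ i : Fin (n+2-p), ∑ j : Fin (n+2-p),
            ((if j = i then G i j else 0)
              - G i j * (e i 0 * e j 0) - G i j * (e i 1 * e j 1)) :=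
          Finset.sum_congr rfl fun i _ => Finset.sum_congr rfl fun j _ => e1 i j
      _ = (∑ i : Fin (n+2-p), ∑ j : Fin (n+2-p), (if j = i then G i j else 0))
          - (∑ i : Fin (n+2-p), ∑ j : Fin (n+2-p), G i j * (e i 0 * e j 0))
          - (∑ i : Fin (n+2-p), ∑ j : Fin (n+2-p), G i j * (e i 1 * e j 1)) := by
          simp only [Finset.sum_sub_distrib]
      _ = (∑ i : Fin (n+2-p), G i i) - Tx - Ty := by rw [hid, hqx, hqy]
  -- SW in terms of G
  have hWsum : SW = (∑ i : Fin (n+2-p), G i i)^2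
      - (∑ i : Fin (n+2-p), ∑ j : Fin (n+2-p), (G i j)^2) := by
    rw [hSW]
    have step : ∀ i j : Fin (n+2-p),
        (∑ a : Fin (n+2), ∑ b : Fin (n+2),
          if 1 < a ∧ a < b then (e i a * e j b - e i b * e j a)^2 else 0)
        = G i i * G j j - (G i j)^2 := by
      intro i j
      simp only [hGdef]
      exact dw_lagrange (m := n) (e i) (e j)
    simp only [step]
    rw [sq (∑ i : Fin (n+2-p), G i i), Finset.sum_mul_sum]
    simp only [Finset.sum_sub_distrib]
  -- casts
  have hnp : ((n - p : ℕ) : ℝ) = (n : ℝ) - p := by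
    rw [Nat.cast_sub (by omega)]
  have hnp1 : ((n - p - 1 : ℕ) : ℝ) = (n : ℝ) - p - 1 := by
    rw [Nat.cast_sub (by omega : 1 ≤ n - p), Nat.cast_sub (by omega), Nat.cast_one]
  have hK : ((n + 2 - p : ℕ) : ℝ) = (n : ℝ) + 2 - p := by
    rw [Nat.cast_sub (by omega)]
    push_cast
    ring
  have hnR : (p : ℝ) + 2 ≤ (n : ℝ) := by exact_mod_cast hpn
  clear_value SW G A B Tx Ty
  -- the key combinatorial estimate
  have hSW_ge : ((n - p : ℕ) : ℝ) * ((n - p - 1 : ℕ) : ℝ) ≤ SW := by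
    rw [hWsum, hGsq, htr, hnp, hnp1, hK]
    have hprod : 0 ≤ (2 - A - B) * (2 * ((n:ℝ) + 2 - p) - 3 - A - B) := by
      apply mul_nonneg <;> linarith
    nlinarith [hprod, hTx0, hTy0]
  have main : ((n - p : ℕ) : ℝ) * ((n - p - 1 : ℕ) : ℝ) * c ≤ sSum (dwK n β ω r t) e := by
    calc ((n - p : ℕ) : ℝ) * ((n - p - 1 : ℕ) : ℝ) * c ≤ SW * c :=
          mul_le_mul_of_nonneg_right hSW_ge hc
      _ = c * SW := mul_comm _ _
      _ ≤ _ := hlow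
  refine ⟨main, fun hpos => lt_of_lt_of_le ?_ main⟩
  have h2 : (0:ℝ) < ((n - p : ℕ) : ℝ) := by
    exact_mod_cast Nat.cast_pos.mpr (by omega : 0 < n - p)
  have h3 : (0:ℝ) < ((n - p - 1 : ℕ) : ℝ) := by
    exact_mod_cast Nat.cast_pos.mpr (by omega : 0 < n - p - 1)
  exact mul_pos (mul_pos h2 h3) hpos
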